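/- Let c be a complex number, and suppose c = a/q + γ where a, q are coprime Gaussian integers, q ≠ 0, and |γ| ≤ |q|⁻². If n₁, n₂ are Gaussian integers with n₁ ≢ n₂ (mod q), then ‖n₁c − n₂c‖ ≥ 1/(√2·|q|) − |n₁ − n₂|/|q|², where for a complex number z, ‖z‖ := max{‖Re(z)‖, ‖Im(z)‖} and ‖x‖ denotes the distance from the real x to the nearest rational integer. -/

import Mathlib

open Complex GaussianInt

/-- Distance from a real number to the nearest integer. -/
noncomputable def nint (x : ℝ) : ℝ := ⨅ n : ℤ, |x - (n : ℝ)|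

/-- Sup-norm distance from a complex number to the nearest Gaussian integer. -/
noncomputable def nintC (z : ℂ) : ℝ := max (nint z.re) (nint z.im)

lemma nint_eq_round (x : ℝ) : nint x = |x - (round x : ℝ)| := by
  apply le_antisymm
  · exact ciInf_le ⟨0, by rintro _ ⟨n, rfl⟩; positivity⟩ (round x)
  · apply le_ciInf
    intro n
    rcases eq_or_ne n (round x) with rfl | h
    · exact le_rfl
    · have h1 : (1 : ℝ) ≤ |(round x : ℝ) - (n : ℝ)| := by
        rw [← Int.cast_sub, ← Int.cast_abs]
        exact_mod_cast Int.one_le_abs (sub_ne_zero.mpr (Ne.symm h))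
      have h2 : |x - (round x : ℝ)| ≤ 1 / 2 := abs_sub_round x
      have h3 : |(round x : ℝ) - n| ≤ |x - (round x : ℝ)| + |x - n| := by
        calc |(round x : ℝ) - n| = |-(x - (round x : ℝ)) + (x - n)| := by ring_nf
          _ ≤ |-(x - (round x:ℝ))| + |x - n| := abs_add_le _ _
          _ = |x - (round x:ℝ)| + |x - n| := by rw [abs_neg]
      linarith

lemma one_le_abs_gaussian {x : GaussianInt} (hx : x ≠ 0) :
    1 ≤ ‖(x : ℂ)‖ := by
  have h0 : (1 : ℤ) ≤ x.norm := by
    have := GaussianInt.norm_nonneg x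
    have hne : x.norm ≠ 0 := GaussianInt.norm_eq_zero.not.mpr hx
    omega
  have h1 : (1 : ℝ) ≤ Complex.normSq (x : ℂ) := by
    rw [← GaussianInt.intCast_real_norm]
    exact_mod_cast h0
  calc (1:ℝ) = Real.sqrt 1 := (Real.sqrt_one).symm
    _ ≤ Real.sqrt (Complex.normSq (x:ℂ)) := Real.sqrt_le_sqrt h1
    _ = ‖(x : ℂ)‖ := by rw [Complex.norm_def]

/-- Spacing of the points `nc` modulo `ℤ[i]`: if `c = a/q + γ` with `(a,q) = 1`,
`|γ| ≤ |q|⁻²`, and `n₁ ≢ n₂ (mod q)`, then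
`‖n₁c − n₂c‖ ≥ 1/(√2|q|) − |n₁ − n₂|/|q|²`. -/
theorem gaussian_spacing (c γ : ℂ) (a q : GaussianInt) (hq : q ≠ 0)
    (hcop : IsCoprime a q) (hc : c = (a : ℂ) / (q : ℂ) + γ)
    (hγ : ‖γ‖ ≤ (‖(q : ℂ)‖)⁻¹ ^ 2)
    (n₁ n₂ : GaussianInt) (hmod : ¬ q ∣ (n₁ - n₂)) :
    1 / (Real.sqrt 2 * ‖(q : ℂ)‖) -
        ‖((n₁ : ℂ) - (n₂ : ℂ))‖ / ‖(q : ℂ)‖ ^ 2 ≤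
      nintC ((n₁ : ℂ) * c - (n₂ : ℂ) * c) := by
  set m : GaussianInt := n₁ - n₂ with hm
  have hqC : (q : ℂ) ≠ 0 := by simpa [GaussianInt.toComplex_eq_zero] using hq
  have habsq : 0 < ‖(q : ℂ)‖ := by
    simpa [norm_pos_iff] using hqC
  have hsqrt2 : (0:ℝ) < Real.sqrt 2 := by positivity
  have hqma : ¬ q ∣ m * a := fun h => hmod (hcop.symm.dvd_of_dvd_mul_right h)
  set z : ℂ := (n₁ : ℂ) * c - (n₂ : ℂ) * c with hz
  have hmC : ((m : ℂ)) = (n₁ : ℂ) - (n₂ : ℂ) := by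
    rw [hm, GaussianInt.toComplex_sub]
  have hzeq : z = (m : ℂ) * (a : ℂ) / (q : ℂ) + (m : ℂ) * γ := by
    rw [hz, hc, hmC]
    field_simp
  set g : GaussianInt := ⟨round z.re, round z.im⟩ with hg
  have hgre : ((g : ℂ)).re = (round z.re : ℝ) := by
    rw [hg, GaussianInt.toComplex_def']; simp
  have hgim : ((g : ℂ)).im = (round z.im : ℝ) := by
    rw [hg, GaussianInt.toComplex_def']; simp
  -- lower bound nintC z ≥ |z - g| / √2
  have key1 : ‖(z - g)‖ / Real.sqrt 2 ≤ nintC z := by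
    have hb := Complex.norm_le_sqrt_two_mul_max (z - (g : ℂ))
    have hre : (z - (g:ℂ)).re = z.re - (round z.re : ℝ) := by
      simp [Complex.sub_re, hgre]
    have him : (z - (g:ℂ)).im = z.im - (round z.im : ℝ) := by
      simp [Complex.sub_im, hgim]
    rw [hre, him] at hb
    rw [div_le_iff₀ hsqrt2]
    calc ‖(z - g)‖
        ≤ Real.sqrt 2 * max |z.re - (round z.re:ℝ)| |z.im - (round z.im:ℝ)| := hb
      _ = nintC z * Real.sqrt 2 := by
          rw [nintC, nint_eq_round, nint_eq_round]; ring
  -- |m a / q - g| ≥ 1 / |q|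
  have hcast : ((m * a - g * q : GaussianInt) : ℂ) = (m:ℂ)*(a:ℂ) - (g:ℂ)*(q:ℂ) := by
    simp [GaussianInt.toComplex_sub, GaussianInt.toComplex_mul]
  have hma_sub : (m : ℂ) * (a:ℂ) / (q:ℂ) - (g:ℂ)
      = ((m * a - g * q : GaussianInt) : ℂ) / (q : ℂ) := by
    rw [hcast]
    field_simp
  have hne : m * a - g * q ≠ 0 := by
    intro h
    exact hqma ⟨g, by linear_combination h⟩
  have key2 : 1 / ‖(q : ℂ)‖ ≤ ‖((m : ℂ) * (a:ℂ) / (q:ℂ) - (g:ℂ))‖ := by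
    rw [hma_sub, norm_div]
    gcongr
    exact one_le_abs_gaussian hne
  -- |m γ| ≤ |m| / |q|²
  have key3 : ‖((m:ℂ) * γ)‖ ≤ ‖(m:ℂ)‖ / ‖(q:ℂ)‖ ^ 2 := by
    rw [norm_mul, div_eq_mul_inv, ← inv_pow]
    exact mul_le_mul_of_nonneg_left hγ (norm_nonneg _)
  -- triangle inequality
  have key4 : ‖((m : ℂ) * (a:ℂ) / (q:ℂ) - (g:ℂ))‖ - ‖((m:ℂ)*γ)‖
      ≤ ‖(z - g)‖ := by
    have heq : z - (g:ℂ) = ((m : ℂ) * (a:ℂ) / (q:ℂ) - (g:ℂ)) + (m:ℂ) * γ := by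
      rw [hzeq]; ring
    rw [heq]
    have htri : ‖((m : ℂ) * (a:ℂ) / (q:ℂ) - (g:ℂ))‖
        ≤ ‖(((m : ℂ) * (a:ℂ) / (q:ℂ) - (g:ℂ)) + (m:ℂ) * γ)‖
          + ‖((m:ℂ)*γ)‖ := by
      simpa using norm_add_le (((m : ℂ) * (a:ℂ) / (q:ℂ) - (g:ℂ)) + (m:ℂ) * γ) (-((m:ℂ)*γ))
    linarith
  have habsm : (0:ℝ) ≤ ‖((n₁ : ℂ) - (n₂ : ℂ))‖ := norm_nonneg _
  have h1s : (1:ℝ) ≤ Real.sqrt 2 := by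
    rw [show (1:ℝ) = Real.sqrt 1 from (Real.sqrt_one).symm]
    exact Real.sqrt_le_sqrt (by norm_num)
  calc 1 / (Real.sqrt 2 * ‖(q : ℂ)‖) -
        ‖((n₁ : ℂ) - (n₂ : ℂ))‖ / ‖(q : ℂ)‖ ^ 2
      ≤ (1 / ‖(q:ℂ)‖ - ‖((n₁:ℂ)-(n₂:ℂ))‖ / ‖(q:ℂ)‖^2)
          / Real.sqrt 2 := by
        rw [sub_div, div_div, mul_comm (‖(q:ℂ)‖) (Real.sqrt 2)]
        have h2 : ‖((n₁:ℂ)-(n₂:ℂ))‖ / ‖(q:ℂ)‖^2 / Real.sqrt 2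
            ≤ ‖((n₁:ℂ)-(n₂:ℂ))‖ / ‖(q:ℂ)‖^2 :=
          div_le_self (by positivity) h1s
        linarith
    _ ≤ ‖(z - g)‖ / Real.sqrt 2 := by
        gcongr
        rw [← hmC]
        linarith [key2, key3, key4]
    _ ≤ nintC z := key1
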